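/- Let f ∈ (0,1) and κ, γ₁, γ₂, γ₃ > 0, let u* ∈ [0,1]⁴ be a steady state of the ZIP regulatory system, and let λ₁, λ₂, λ₃, λ₄ ∈ ℂ be the eigenvalues (with multiplicity) of the Jacobian J(u*) regarded as a complex matrix. Then, up to permutation, exactly one of the following holds: (1) all four λᵢ are real and satisfy λᵢ < −1; (2) λ₁, λ₂ are real with λ₁, λ₂ < −1 and λ₃ = conj(λ₄) with Im λ₃ ≠ 0; (3) λ₁ = conj(λ₂) with Im λ₁ ≠ 0 and Re λ₁ < 0, and λ₃ = conj(λ₄) with Im λ₃ ≠ 0. In particular, J(u*) cannot have two conjugate pairs of eigenvalues that both lie on the imaginary axis. -/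
import Mathlib


open Complex Polynomial

/-- The ZIP regulatory vector field on ℝ⁴ (components indexed by `Fin 4`). -/
noncomputable def zipField (κ γ₁ γ₂ γ₃ f : ℝ) (u : Fin 4 → ℝ) : Fin 4 → ℝ :=
  ![κ * (u 2) ^ 2 * (1 - u 0) - u 0,
    u 0 * f - u 1,
    1 - γ₁ * u 2 * u 3 - u 2,
    γ₂ * u 1 - γ₃ * u 2 * u 3 - (1 + γ₂ * u 1) * u 3]

/-- The Jacobian matrix of the ZIP regulatory vector field at a point u. -/
noncomputable def zipJacobian (κ γ₁ γ₂ γ₃ f : ℝ) (u : Fin 4 → ℝ) :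
    Matrix (Fin 4) (Fin 4) ℝ :=
  !![-(κ * (u 2) ^ 2) - 1, 0, 2 * κ * u 2 * (1 - u 0), 0;
     f, -1, 0, 0;
     0, 0, -(γ₁ * u 3) - 1, -(γ₁ * u 2);
     0, γ₂ * (1 - u 3), -(γ₃ * u 3), -(γ₃ * u 2) - 1 - γ₂ * u 1]

/-- Case 1: all four eigenvalues are real and < −1. -/
def zipCase1 (μ : Fin 4 → ℂ) : Prop :=
  ∀ i, (μ i).im = 0 ∧ (μ i).re < -1

/-- Case 2: two eigenvalues are real and < −1, the other two form a
non-real conjugate pair. -/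
def zipCase2 (μ : Fin 4 → ℂ) : Prop :=
  (μ 0).im = 0 ∧ (μ 0).re < -1 ∧ (μ 1).im = 0 ∧ (μ 1).re < -1 ∧
  μ 2 = starRingEnd ℂ (μ 3) ∧ (μ 2).im ≠ 0

/-- Case 3: two non-real conjugate pairs, the first with negative real part. -/
def zipCase3 (μ : Fin 4 → ℂ) : Prop :=
  μ 0 = starRingEnd ℂ (μ 1) ∧ (μ 0).im ≠ 0 ∧ (μ 0).re < 0 ∧
  μ 2 = starRingEnd ℂ (μ 3) ∧ (μ 2).im ≠ 0

lemma zip_det_fin_four {R : Type*} [CommRing R] (A : Matrix (Fin 4) (Fin 4) R) : A.det =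
    A 0 0 * (A 1 1 * (A 2 2 * A 3 3 - A 2 3 * A 3 2) - A 1 2 * (A 2 1 * A 3 3 - A 2 3 * A 3 1) + A 1 3 * (A 2 1 * A 3 2 - A 2 2 * A 3 1))
  - A 0 1 * (A 1 0 * (A 2 2 * A 3 3 - A 2 3 * A 3 2) - A 1 2 * (A 2 0 * A 3 3 - A 2 3 * A 3 0) + A 1 3 * (A 2 0 * A 3 2 - A 2 2 * A 3 0))
  + A 0 2 * (A 1 0 * (A 2 1 * A 3 3 - A 2 3 * A 3 1) - A 1 1 * (A 2 0 * A 3 3 - A 2 3 * A 3 0) + A 1 3 * (A 2 0 * A 3 1 - A 2 1 * A 3 0))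
  - A 0 3 * (A 1 0 * (A 2 1 * A 3 2 - A 2 2 * A 3 1) - A 1 1 * (A 2 0 * A 3 2 - A 2 2 * A 3 0) + A 1 2 * (A 2 0 * A 3 1 - A 2 1 * A 3 0)) := by
  rw [Matrix.det_succ_row_zero]
  simp [Fin.sum_univ_succ, Matrix.det_fin_three, Matrix.submatrix,
    show (Fin.succ 2 : Fin 4) = 3 from rfl, show ((2:Fin 4).succAbove 2) = 3 from rfl,
    show ((1:Fin 4).succAbove 2) = 3 from rfl, show ((3:Fin 4).succAbove 2) = 2 from rfl,
    show (Fin.castSucc 2 : Fin 4) = 2 from rfl]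
  ring

lemma zip_eval_charpoly (κ γ₁ γ₂ γ₃ f : ℝ) (u : Fin 4 → ℝ) (x : ℝ) :
    (zipJacobian κ γ₁ γ₂ γ₃ f u).charpoly.eval x =
      (x+1) * ((x+1) + κ*(u 2)^2) *
        ((x+1)^2 + (γ₁*u 3 + γ₃*u 2 + γ₂*u 1)*(x+1) + γ₁*γ₂*(u 1)*(u 3))
      + f * (2*κ*u 2*(1-u 0)) * (γ₁*u 2) * (γ₂*(1-u 3)) := by
  have h : (zipJacobian κ γ₁ γ₂ γ₃ f u).charpoly.eval x =
      (((Polynomial.evalRingHom x).mapMatrix) (Matrix.charmatrix (zipJacobian κ γ₁ γ₂ γ₃ f u))).det := by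
    rw [Matrix.charpoly]
    exact RingHom.map_det (Polynomial.evalRingHom x) (Matrix.charmatrix (zipJacobian κ γ₁ γ₂ γ₃ f u))
  rw [h]; rw [zip_det_fin_four ((Polynomial.evalRingHom x).mapMatrix (Matrix.charmatrix (zipJacobian κ γ₁ γ₂ γ₃ f u)))]
  simp [Matrix.charmatrix, zipJacobian, Matrix.one_apply, Matrix.map_apply, Matrix.vecHead, Matrix.vecTail]
  ring

lemma zip_charpoly_pos (κ γ₁ γ₂ γ₃ f : ℝ) (hκ : 0 < κ) (hγ₁ : 0 < γ₁) (hγ₂ : 0 < γ₂) (hγ₃ : 0 < γ₃)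
    (hf : f ∈ Set.Ioo (0 : ℝ) 1)
    (u : Fin 4 → ℝ) (hu : ∀ i, u i ∈ Set.Icc (0 : ℝ) 1)
    (hsteady : zipField κ γ₁ γ₂ γ₃ f u = 0) (x : ℝ) (hx : -1 ≤ x) :
    0 < (zipJacobian κ γ₁ γ₂ γ₃ f u).charpoly.eval x := by
  have h0 := congrFun hsteady 0
  have h2 := congrFun hsteady 2
  have h3 := congrFun hsteady 3
  simp [zipField] at h0 h2 h3
  obtain ⟨hu0l, hu0r⟩ := hu 0
  obtain ⟨hu1l, hu1r⟩ := hu 1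
  obtain ⟨hu2l, hu2r⟩ := hu 2
  obtain ⟨hu3l, hu3r⟩ := hu 3
  have hu2pos : 0 < u 2 := by nlinarith [mul_nonneg hγ₁.le hu3l]
  have hu0lt : u 0 < 1 := by nlinarith [mul_nonneg hκ.le (sq_nonneg (u 2))]
  have hu3lt : u 3 < 1 := by nlinarith [mul_nonneg (mul_nonneg hγ₃.le hu2l) hu3l, mul_nonneg hγ₂.le hu1l]
  rw [zip_eval_charpoly]
  have hy : (0:ℝ) ≤ x + 1 := by linarith
  have h1 : 0 ≤ (x+1) * ((x+1) + κ*(u 2)^2) *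
      ((x+1)^2 + (γ₁*u 3 + γ₃*u 2 + γ₂*u 1)*(x+1) + γ₁*γ₂*(u 1)*(u 3)) := by
    apply mul_nonneg (mul_nonneg hy (by nlinarith [sq_nonneg (u 2)]))
    have : 0 ≤ (γ₁*u 3 + γ₃*u 2 + γ₂*u 1) := by positivity
    nlinarith [sq_nonneg (x+1), mul_nonneg (mul_nonneg (mul_nonneg hγ₁.le hγ₂.le) hu1l) hu3l]
  have h2' : 0 < f * (2*κ*u 2*(1-u 0)) * (γ₁*u 2) * (γ₂*(1-u 3)) := by
    apply mul_pos (mul_pos (mul_pos hf.1 (by nlinarith [mul_pos (mul_pos hκ hu2pos) (sub_pos.2 hu0lt)])) (by positivity))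
    nlinarith
  linarith

lemma zip_real_root_lt (κ γ₁ γ₂ γ₃ f : ℝ) (hκ : 0 < κ) (hγ₁ : 0 < γ₁) (hγ₂ : 0 < γ₂) (hγ₃ : 0 < γ₃)
    (hf : f ∈ Set.Ioo (0 : ℝ) 1)
    (u : Fin 4 → ℝ) (hu : ∀ i, u i ∈ Set.Icc (0 : ℝ) 1)
    (hsteady : zipField κ γ₁ γ₂ γ₃ f u = 0)
    (lam : Fin 4 → ℂ)
    (heig : ((zipJacobian κ γ₁ γ₂ γ₃ f u).map (Complex.ofReal)).charpoly =
      ∏ i : Fin 4, (X - C (lam i)))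
    (i : Fin 4) (him : (lam i).im = 0) : (lam i).re < -1 := by
  by_contra hcon
  push_neg at hcon
  have hz : Polynomial.eval (lam i) (∏ j : Fin 4, (X - C (lam j))) = 0 := by
    rw [Polynomial.eval_prod]
    exact Finset.prod_eq_zero (Finset.mem_univ i) (by simp)
  rw [← heig] at hz
  have hmap : (zipJacobian κ γ₁ γ₂ γ₃ f u).map (Complex.ofReal) =
      (zipJacobian κ γ₁ γ₂ γ₃ f u).map (Complex.ofRealHom) := rfl
  rw [hmap, Matrix.charpoly_map] at hz
  have hlam : lam i = (((lam i).re : ℝ) : ℂ) := by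
    apply Complex.ext <;> simp [him]
  rw [hlam, Polynomial.eval_map] at hz
  have hz2 : (Complex.ofRealHom ((zipJacobian κ γ₁ γ₂ γ₃ f u).charpoly.eval ((lam i).re)) : ℂ) = 0 := by
    rw [← hz]
    exact (Polynomial.eval₂_at_apply Complex.ofRealHom ((lam i).re)).symm
  have hpos := zip_charpoly_pos κ γ₁ γ₂ γ₃ f hκ hγ₁ hγ₂ hγ₃ hf u hu hsteady ((lam i).re) hcon
  rw [Complex.ofRealHom_eq_coe, Complex.ofReal_eq_zero] at hz2
  linarith

lemma zip_sum_lam (κ γ₁ γ₂ γ₃ f : ℝ) (u : Fin 4 → ℝ)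
    (lam : Fin 4 → ℂ)
    (heig : ((zipJacobian κ γ₁ γ₂ γ₃ f u).map (Complex.ofReal)).charpoly =
      ∏ i : Fin 4, (X - C (lam i))) :
    ∑ i, lam i = ((Matrix.trace (zipJacobian κ γ₁ γ₂ γ₃ f u) : ℝ) : ℂ) := by
  have h := Matrix.trace_eq_neg_charpoly_coeff ((zipJacobian κ γ₁ γ₂ γ₃ f u).map (Complex.ofReal))
  rw [heig] at h
  have hc := Polynomial.prod_X_sub_C_coeff_card_pred (Finset.univ : Finset (Fin 4)) lam (by simp)
  simp only [Finset.card_univ, Fintype.card_fin] at hc h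
  rw [hc] at h
  have htr : Matrix.trace ((zipJacobian κ γ₁ γ₂ γ₃ f u).map (Complex.ofReal)) =
      ((Matrix.trace (zipJacobian κ γ₁ γ₂ γ₃ f u) : ℝ) : ℂ) := by
    simp [Matrix.trace, Matrix.diag, Fin.sum_univ_four, Matrix.map_apply]
  rw [htr] at h
  linear_combination -h

lemma zip_conj_multiset (lam : Fin 4 → ℂ) (A : Matrix (Fin 4) (Fin 4) ℝ)
    (heig : (A.map (Complex.ofReal)).charpoly = ∏ i : Fin 4, (X - C (lam i))) :
    Multiset.map (starRingEnd ℂ) (Multiset.map lam Finset.univ.val) =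
      Multiset.map lam Finset.univ.val := by
  have hmap : A.map (Complex.ofReal) = A.map (Complex.ofRealHom) := rfl
  have hprod : (∏ i : Fin 4, (X - C (starRingEnd ℂ (lam i)))) = ∏ i : Fin 4, (X - C (lam i)) := by
    have := congrArg (Polynomial.map (starRingEnd ℂ)) heig
    rw [hmap, Matrix.charpoly_map, Polynomial.map_map] at this
    rw [show (starRingEnd ℂ).comp Complex.ofRealHom = Complex.ofRealHom from
      RingHom.ext fun r => Complex.conj_ofReal r] at this
    rw [← Matrix.charpoly_map, ← hmap, heig, Polynomial.map_prod] at this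
    simp only [Polynomial.map_sub, Polynomial.map_X, Polynomial.map_C] at this
    exact this.symm
  have h1 : (∏ i : Fin 4, (X - C (starRingEnd ℂ (lam i)))) =
      (((Multiset.map lam Finset.univ.val).map (starRingEnd ℂ)).map fun a => X - C a).prod := by
    rw [Finset.prod_eq_multiset_prod, Multiset.map_map, Multiset.map_map]
    rfl
  have h2 : (∏ i : Fin 4, (X - C (lam i))) =
      ((Multiset.map lam Finset.univ.val).map fun a => X - C a).prod := by
    rw [Finset.prod_eq_multiset_prod, Multiset.map_map]
    rfl
  have := congrArg Polynomial.roots hprod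
  rwa [h1, h2, Polynomial.roots_multiset_prod_X_sub_C,
    Polynomial.roots_multiset_prod_X_sub_C] at this

lemma zip_pair_conj (a b c d : ℂ)
    (hinv : Multiset.map (starRingEnd ℂ) {a,b,c,d} = ({a,b,c,d} : Multiset ℂ))
    (hb : b = starRingEnd ℂ a) (hc : c.im ≠ 0) : d = starRingEnd ℂ c := by
  have hinj : Function.Injective (starRingEnd ℂ) := (starRingEnd ℂ).injective
  have ht : ((({a,b,c,d} : Multiset ℂ).erase a).erase b) = {c, d} := by
    simp [Multiset.erase_cons_head]
  have htinv : Multiset.map (starRingEnd ℂ) ({c,d} : Multiset ℂ) = {c,d} := by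
    rw [← ht, Multiset.map_erase _ hinj, Multiset.map_erase _ hinj, hinv,
      ← hb, show starRingEnd ℂ b = a by rw [hb]; exact Complex.conj_conj a,
      Multiset.erase_comm]
  have hmem : starRingEnd ℂ c ∈ ({c, d} : Multiset ℂ) := by
    rw [← htinv]
    exact Multiset.mem_map_of_mem _ (by simp)
  simp only [Multiset.insert_eq_cons, Multiset.mem_cons, Multiset.mem_singleton] at hmem
  rcases hmem with h | h
  · exact absurd (Complex.conj_eq_iff_im.mp h) hc
  · exact h.symm
/-- up to permutation, the eigenvalues of the Jacobian at a
steady state fall into exactly one of three configurations; in particular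
the Jacobian cannot have two conjugate pairs of eigenvalues both lying on the
imaginary axis. -/
theorem zip_eigenvalue_configurations
    (κ γ₁ γ₂ γ₃ f : ℝ) (hκ : 0 < κ) (hγ₁ : 0 < γ₁) (hγ₂ : 0 < γ₂) (hγ₃ : 0 < γ₃)
    (hf : f ∈ Set.Ioo (0 : ℝ) 1)
    (u : Fin 4 → ℝ) (hu : ∀ i, u i ∈ Set.Icc (0 : ℝ) 1)
    (hsteady : zipField κ γ₁ γ₂ γ₃ f u = 0)
    (lam : Fin 4 → ℂ)
    (heig : ((zipJacobian κ γ₁ γ₂ γ₃ f u).map (Complex.ofReal)).charpoly =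
      ∏ i : Fin 4, (X - C (lam i))) :
    (((∃ σ : Equiv.Perm (Fin 4), zipCase1 (lam ∘ σ)) ∧
        ¬(∃ σ : Equiv.Perm (Fin 4), zipCase2 (lam ∘ σ)) ∧
        ¬(∃ σ : Equiv.Perm (Fin 4), zipCase3 (lam ∘ σ))) ∨
      (¬(∃ σ : Equiv.Perm (Fin 4), zipCase1 (lam ∘ σ)) ∧
        (∃ σ : Equiv.Perm (Fin 4), zipCase2 (lam ∘ σ)) ∧
        ¬(∃ σ : Equiv.Perm (Fin 4), zipCase3 (lam ∘ σ))) ∨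
      (¬(∃ σ : Equiv.Perm (Fin 4), zipCase1 (lam ∘ σ)) ∧
        ¬(∃ σ : Equiv.Perm (Fin 4), zipCase2 (lam ∘ σ)) ∧
        (∃ σ : Equiv.Perm (Fin 4), zipCase3 (lam ∘ σ)))) ∧
    ¬(∃ σ : Equiv.Perm (Fin 4),
        lam (σ 0) = starRingEnd ℂ (lam (σ 1)) ∧ (lam (σ 0)).im ≠ 0 ∧
        (lam (σ 0)).re = 0 ∧
        lam (σ 2) = starRingEnd ℂ (lam (σ 3)) ∧ (lam (σ 2)).im ≠ 0 ∧
        (lam (σ 2)).re = 0) := by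
  have hreal : ∀ i, (lam i).im = 0 → (lam i).re < -1 := fun i him =>
    zip_real_root_lt κ γ₁ γ₂ γ₃ f hκ hγ₁ hγ₂ hγ₃ hf u hu hsteady lam heig i him
  have hsum := zip_sum_lam κ γ₁ γ₂ γ₃ f u lam heig
  have hTneg : Matrix.trace (zipJacobian κ γ₁ γ₂ γ₃ f u) < 0 := by
    obtain ⟨hu1l, -⟩ := hu 1
    obtain ⟨hu2l, -⟩ := hu 2
    obtain ⟨hu3l, -⟩ := hu 3
    simp [Matrix.trace, Matrix.diag, Fin.sum_univ_four, zipJacobian]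
    nlinarith [mul_nonneg hκ.le (sq_nonneg (u 2)), mul_nonneg hγ₁.le hu3l,
      mul_nonneg hγ₃.le hu2l, mul_nonneg hγ₂.le hu1l]
  have hre : (lam 0).re + (lam 1).re + (lam 2).re + (lam 3).re < 0 := by
    have h := congrArg Complex.re hsum
    rw [Fin.sum_univ_four] at h
    simp only [Complex.add_re, Complex.ofReal_re] at h
    linarith
  have hconjinv : Multiset.map (starRingEnd ℂ) ({lam 0, lam 1, lam 2, lam 3} : Multiset ℂ)
      = {lam 0, lam 1, lam 2, lam 3} :=
    zip_conj_multiset lam (zipJacobian κ γ₁ γ₂ γ₃ f u) heig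
  have hinvP : ∀ a b c d : ℂ, ({a,b,c,d} : Multiset ℂ) = {lam 0, lam 1, lam 2, lam 3} →
      Multiset.map (starRingEnd ℂ) ({a,b,c,d} : Multiset ℂ) = {a,b,c,d} := by
    intro a b c d h
    rw [h]
    exact hconjinv
  have hpair : ∀ i, (lam i).im ≠ 0 → ∃ j, j ≠ i ∧ lam j = starRingEnd ℂ (lam i) := by
    intro i him
    have hm : starRingEnd ℂ (lam i) ∈ ({lam 0, lam 1, lam 2, lam 3} : Multiset ℂ) := by
      rw [← hconjinv]
      exact Multiset.mem_map_of_mem _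
        (show lam i ∈ ({lam 0, lam 1, lam 2, lam 3} : Multiset ℂ) from
          Multiset.mem_map_of_mem lam (Finset.mem_val.mpr (Finset.mem_univ i)))
    have key : ∀ j : Fin 4, starRingEnd ℂ (lam i) = lam j →
        ∃ j, j ≠ i ∧ lam j = starRingEnd ℂ (lam i) := by
      intro j hj
      refine ⟨j, ?_, hj.symm⟩
      rintro rfl
      exact him (Complex.conj_eq_iff_im.mp hj)
    simp only [Multiset.insert_eq_cons, Multiset.mem_cons, Multiset.mem_singleton] at hm
    rcases hm with h|h|h|h
    exacts [key 0 h, key 1 h, key 2 h, key 3 h]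
  have hpairim : ∀ i j, lam j = starRingEnd ℂ (lam i) → (lam i).im ≠ 0 → (lam j).im ≠ 0 := by
    intro i j hj him h
    apply him
    rw [hj] at h
    simpa using h
  have F1 : (∃ σ : Equiv.Perm (Fin 4), zipCase1 (lam ∘ σ)) → ∀ i, (lam i).im = 0 := by
    rintro ⟨σ, hσ⟩ i
    obtain ⟨j, rfl⟩ := σ.surjective i
    exact (hσ j).1
  have F2n : (∃ σ : Equiv.Perm (Fin 4), zipCase2 (lam ∘ σ)) → ∃ i, (lam i).im ≠ 0 :=
    fun ⟨σ, h⟩ => ⟨σ 2, h.2.2.2.2.2⟩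
  have F2r : (∃ σ : Equiv.Perm (Fin 4), zipCase2 (lam ∘ σ)) → ∃ i, (lam i).im = 0 :=
    fun ⟨σ, h⟩ => ⟨σ 0, h.1⟩
  have F3 : (∃ σ : Equiv.Perm (Fin 4), zipCase3 (lam ∘ σ)) → ∀ i, (lam i).im ≠ 0 := by
    rintro ⟨σ, e1, e2, -, e4, e5⟩ i
    have i1 : (lam (σ 0)).im = -((lam (σ 1)).im) := by
      have := congrArg Complex.im e1
      simpa using this
    have i3 : (lam (σ 2)).im = -((lam (σ 3)).im) := by
      have := congrArg Complex.im e4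
      simpa using this
    obtain ⟨j, rfl⟩ := σ.surjective i
    fin_cases j
    · exact e2
    · intro h
      exact e2 (show (lam (σ 0)).im = 0 by
        rw [i1, show (lam (σ 1)).im = 0 from h, neg_zero])
    · exact e5
    · intro h
      exact e5 (show (lam (σ 2)).im = 0 by
        rw [i3, show (lam (σ 3)).im = 0 from h, neg_zero])
  refine ⟨?_, ?_⟩
  swap
  · rintro ⟨σ, e1, -, e3, e4, -, e6⟩
    have r1 : (lam (σ 0)).re = (lam (σ 1)).re := by
      have := congrArg Complex.re e1
      simpa using this
    have r3 : (lam (σ 2)).re = (lam (σ 3)).re := by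
      have := congrArg Complex.re e4
      simpa using this
    have hsc : ∑ i, lam (σ i) = ∑ i, lam i := Equiv.sum_comp σ lam
    have hrc := congrArg Complex.re hsc
    rw [Fin.sum_univ_four, Fin.sum_univ_four] at hrc
    simp only [Complex.add_re] at hrc
    linarith
  by_cases h0 : (lam 0).im = 0 <;> by_cases h1 : (lam 1).im = 0 <;>
    by_cases h2 : (lam 2).im = 0 <;> by_cases h3 : (lam 3).im = 0
  -- TTTT : all real
  · left
    have hall : ∀ i : Fin 4, (lam i).im = 0 := by
      intro i; fin_cases i; exacts [h0, h1, h2, h3]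
    refine ⟨⟨Equiv.refl _, fun i => ⟨hall i, hreal i (hall i)⟩⟩, ?_, ?_⟩
    · rintro h
      obtain ⟨i, hi⟩ := F2n h
      exact hi (hall i)
    · rintro h
      exact F3 h 0 (hall 0)
  -- TTTF : nonreal 3 only
  · exfalso
    obtain ⟨j, hj, hlj⟩ := hpair 3 h3
    have hjim := hpairim 3 j hlj h3
    fin_cases j
    exacts [hjim h0, hjim h1, hjim h2, hj rfl]
  -- TTFT : nonreal 2 only
  · exfalso
    obtain ⟨j, hj, hlj⟩ := hpair 2 h2
    have hjim := hpairim 2 j hlj h2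
    fin_cases j
    exacts [hjim h0, hjim h1, hj rfl, hjim h3]
  -- TTFF : reals 0,1 ; nonreals 2,3
  · right; left
    obtain ⟨j, hj, hlj⟩ := hpair 2 h2
    have hjim := hpairim 2 j hlj h2
    fin_cases j
    · exact absurd h0 hjim
    · exact absurd h1 hjim
    · exact absurd rfl hj
    · have hlj' : lam 3 = starRingEnd ℂ (lam 2) := hlj
      have hp : lam 2 = starRingEnd ℂ (lam 3) := by
        rw [hlj']; exact (Complex.conj_conj _).symm
      exact ⟨fun h => h2 (F1 h 2),
        ⟨Equiv.refl _, h0, hreal 0 h0, h1, hreal 1 h1, hp, h2⟩,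
        fun h => F3 h 0 h0⟩
  -- TFTT : nonreal 1 only
  · exfalso
    obtain ⟨j, hj, hlj⟩ := hpair 1 h1
    have hjim := hpairim 1 j hlj h1
    fin_cases j
    exacts [hjim h0, hj rfl, hjim h2, hjim h3]
  -- TFTF : reals 0,2 ; nonreals 1,3
  · right; left
    obtain ⟨j, hj, hlj⟩ := hpair 1 h1
    have hjim := hpairim 1 j hlj h1
    fin_cases j
    · exact absurd h0 hjim
    · exact absurd rfl hj
    · exact absurd h2 hjim
    · have hlj' : lam 3 = starRingEnd ℂ (lam 1) := hlj
      have hp : lam 1 = starRingEnd ℂ (lam 3) := by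
        rw [hlj']; exact (Complex.conj_conj _).symm
      exact ⟨fun h => h1 (F1 h 1),
        ⟨⟨![0,2,1,3], ![0,2,1,3], by decide, by decide⟩,
          h0, hreal 0 h0, h2, hreal 2 h2, hp, h1⟩,
        fun h => F3 h 0 h0⟩
  -- TFFT : reals 0,3 ; nonreals 1,2
  · right; left
    obtain ⟨j, hj, hlj⟩ := hpair 1 h1
    have hjim := hpairim 1 j hlj h1
    fin_cases j
    · exact absurd h0 hjim
    · exact absurd rfl hj
    · have hlj' : lam 2 = starRingEnd ℂ (lam 1) := hlj
      have hp : lam 1 = starRingEnd ℂ (lam 2) := by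
        rw [hlj']; exact (Complex.conj_conj _).symm
      exact ⟨fun h => h1 (F1 h 1),
        ⟨⟨![0,3,1,2], ![0,2,3,1], by decide, by decide⟩,
          h0, hreal 0 h0, h3, hreal 3 h3, hp, h1⟩,
        fun h => F3 h 0 h0⟩
    · exact absurd h3 hjim
  -- TFFF : real 0 only
  · exfalso
    obtain ⟨j, hj, hlj⟩ := hpair 1 h1
    have hjim := hpairim 1 j hlj h1
    fin_cases j
    · exact hjim h0
    · exact hj rfl
    · have hlj' : lam 2 = starRingEnd ℂ (lam 1) := hlj
      have hd : lam 0 = starRingEnd ℂ (lam 3) :=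
        zip_pair_conj (lam 1) (lam 2) (lam 3) (lam 0)
          (hinvP _ _ _ _ (by simp only [Multiset.insert_eq_cons, ← Multiset.cons_zero]; rw [Multiset.cons_swap (lam 0) (lam 1),
            Multiset.cons_swap (lam 0) (lam 2), Multiset.cons_swap (lam 0) (lam 3)])) hlj' h3
      exact hpairim 3 0 hd h3 h0
    · have hlj' : lam 3 = starRingEnd ℂ (lam 1) := hlj
      have hd : lam 0 = starRingEnd ℂ (lam 2) :=
        zip_pair_conj (lam 1) (lam 3) (lam 2) (lam 0)
          (hinvP _ _ _ _ (by simp only [Multiset.insert_eq_cons, ← Multiset.cons_zero]; rw [Multiset.cons_swap (lam 2) (lam 3),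
            Multiset.cons_swap (lam 0) (lam 1), Multiset.cons_swap (lam 0) (lam 3),
            Multiset.cons_swap (lam 0) (lam 2)])) hlj' h2
      exact hpairim 2 0 hd h2 h0
  -- FTTT : nonreal 0 only
  · exfalso
    obtain ⟨j, hj, hlj⟩ := hpair 0 h0
    have hjim := hpairim 0 j hlj h0
    fin_cases j
    exacts [hj rfl, hjim h1, hjim h2, hjim h3]
  -- FTTF : reals 1,2 ; nonreals 0,3
  · right; left
    obtain ⟨j, hj, hlj⟩ := hpair 0 h0
    have hjim := hpairim 0 j hlj h0
    fin_cases j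
    · exact absurd rfl hj
    · exact absurd h1 hjim
    · exact absurd h2 hjim
    · have hlj' : lam 3 = starRingEnd ℂ (lam 0) := hlj
      have hp : lam 0 = starRingEnd ℂ (lam 3) := by
        rw [hlj']; exact (Complex.conj_conj _).symm
      exact ⟨fun h => h0 (F1 h 0),
        ⟨⟨![1,2,0,3], ![2,0,1,3], by decide, by decide⟩,
          h1, hreal 1 h1, h2, hreal 2 h2, hp, h0⟩,
        fun h => F3 h 1 h1⟩
  -- FTFT : reals 1,3 ; nonreals 0,2
  · right; left
    obtain ⟨j, hj, hlj⟩ := hpair 0 h0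
    have hjim := hpairim 0 j hlj h0
    fin_cases j
    · exact absurd rfl hj
    · exact absurd h1 hjim
    · have hlj' : lam 2 = starRingEnd ℂ (lam 0) := hlj
      have hp : lam 0 = starRingEnd ℂ (lam 2) := by
        rw [hlj']; exact (Complex.conj_conj _).symm
      exact ⟨fun h => h0 (F1 h 0),
        ⟨⟨![1,3,0,2], ![2,0,3,1], by decide, by decide⟩,
          h1, hreal 1 h1, h3, hreal 3 h3, hp, h0⟩,
        fun h => F3 h 1 h1⟩
    · exact absurd h3 hjim
  -- FTFF : real 1 only
  · exfalso
    obtain ⟨j, hj, hlj⟩ := hpair 0 h0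
    have hjim := hpairim 0 j hlj h0
    fin_cases j
    · exact hj rfl
    · exact hjim h1
    · have hlj' : lam 2 = starRingEnd ℂ (lam 0) := hlj
      have hd : lam 1 = starRingEnd ℂ (lam 3) :=
        zip_pair_conj (lam 0) (lam 2) (lam 3) (lam 1)
          (hinvP _ _ _ _ (by simp only [Multiset.insert_eq_cons, ← Multiset.cons_zero]; rw [Multiset.cons_swap (lam 1) (lam 2),
            Multiset.cons_swap (lam 1) (lam 3)])) hlj' h3
      exact hpairim 3 1 hd h3 h1
    · have hlj' : lam 3 = starRingEnd ℂ (lam 0) := hlj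
      have hd : lam 1 = starRingEnd ℂ (lam 2) :=
        zip_pair_conj (lam 0) (lam 3) (lam 2) (lam 1)
          (hinvP _ _ _ _ (by simp only [Multiset.insert_eq_cons, ← Multiset.cons_zero]; rw [Multiset.cons_swap (lam 2) (lam 3),
            Multiset.cons_swap (lam 1) (lam 3), Multiset.cons_swap (lam 1) (lam 2)])) hlj' h2
      exact hpairim 2 1 hd h2 h1
  -- FFTT : reals 2,3 ; nonreals 0,1
  · right; left
    obtain ⟨j, hj, hlj⟩ := hpair 0 h0
    have hjim := hpairim 0 j hlj h0
    fin_cases j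
    · exact absurd rfl hj
    · have hlj' : lam 1 = starRingEnd ℂ (lam 0) := hlj
      have hp : lam 0 = starRingEnd ℂ (lam 1) := by
        rw [hlj']; exact (Complex.conj_conj _).symm
      exact ⟨fun h => h0 (F1 h 0),
        ⟨⟨![2,3,0,1], ![2,3,0,1], by decide, by decide⟩,
          h2, hreal 2 h2, h3, hreal 3 h3, hp, h0⟩,
        fun h => F3 h 2 h2⟩
    · exact absurd h2 hjim
    · exact absurd h3 hjim
  -- FFTF : real 2 only
  · exfalso
    obtain ⟨j, hj, hlj⟩ := hpair 0 h0
    have hjim := hpairim 0 j hlj h0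
    fin_cases j
    · exact hj rfl
    · have hlj' : lam 1 = starRingEnd ℂ (lam 0) := hlj
      have hd : lam 2 = starRingEnd ℂ (lam 3) :=
        zip_pair_conj (lam 0) (lam 1) (lam 3) (lam 2)
          (hinvP _ _ _ _ (by simp only [Multiset.insert_eq_cons, ← Multiset.cons_zero]; rw [Multiset.cons_swap (lam 2) (lam 3)])) hlj' h3
      exact hpairim 3 2 hd h3 h2
    · exact hjim h2
    · have hlj' : lam 3 = starRingEnd ℂ (lam 0) := hlj
      have hd : lam 2 = starRingEnd ℂ (lam 1) :=
        zip_pair_conj (lam 0) (lam 3) (lam 1) (lam 2)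
          (hinvP _ _ _ _ (by simp only [Multiset.insert_eq_cons, ← Multiset.cons_zero]; rw [Multiset.cons_swap (lam 2) (lam 3),
            Multiset.cons_swap (lam 1) (lam 3)])) hlj' h1
      exact hpairim 1 2 hd h1 h2
  -- FFFT : real 3 only
  · exfalso
    obtain ⟨j, hj, hlj⟩ := hpair 0 h0
    have hjim := hpairim 0 j hlj h0
    fin_cases j
    · exact hj rfl
    · have hlj' : lam 1 = starRingEnd ℂ (lam 0) := hlj
      have hd : lam 3 = starRingEnd ℂ (lam 2) :=
        zip_pair_conj (lam 0) (lam 1) (lam 2) (lam 3) (hinvP _ _ _ _ rfl) hlj' h2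
      exact hpairim 2 3 hd h2 h3
    · have hlj' : lam 2 = starRingEnd ℂ (lam 0) := hlj
      have hd : lam 3 = starRingEnd ℂ (lam 1) :=
        zip_pair_conj (lam 0) (lam 2) (lam 1) (lam 3)
          (hinvP _ _ _ _ (by simp only [Multiset.insert_eq_cons, ← Multiset.cons_zero]; rw [Multiset.cons_swap (lam 1) (lam 2)])) hlj' h1
      exact hpairim 1 3 hd h1 h3
    · exact hjim h3
  -- FFFF : all nonreal
  · right; right
    have hall : ∀ i : Fin 4, (lam i).im ≠ 0 := by
      intro i; fin_cases i; exacts [h0, h1, h2, h3]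
    refine ⟨fun h => hall 0 (F1 h 0), ?_, ?_⟩
    · rintro h
      obtain ⟨i, hi⟩ := F2r h
      exact hall i hi
    obtain ⟨j, hj, hlj⟩ := hpair 0 h0
    fin_cases j
    · exact absurd rfl hj
    · -- pairs (0,1) and (2,3)
      have hlj' : lam 1 = starRingEnd ℂ (lam 0) := hlj
      have hcd : lam 3 = starRingEnd ℂ (lam 2) :=
        zip_pair_conj (lam 0) (lam 1) (lam 2) (lam 3) (hinvP _ _ _ _ rfl) hlj' h2
      have hab' : lam 0 = starRingEnd ℂ (lam 1) := by
        rw [hlj']; exact (Complex.conj_conj _).symm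
      have hcd' : lam 2 = starRingEnd ℂ (lam 3) := by
        rw [hcd]; exact (Complex.conj_conj _).symm
      have rb : (lam 1).re = (lam 0).re := by rw [hlj']; simp
      have rd : (lam 3).re = (lam 2).re := by rw [hcd]; simp
      by_cases hr : (lam 0).re < 0
      · exact ⟨Equiv.refl _, hab', h0, hr, hcd', h2⟩
      · push_neg at hr
        have hr2 : (lam 2).re < 0 := by linarith
        exact ⟨⟨![2,3,0,1], ![2,3,0,1], by decide, by decide⟩, hcd', h2, hr2, hab', h0⟩
    · -- pairs (0,2) and (1,3)
      have hlj' : lam 2 = starRingEnd ℂ (lam 0) := hlj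
      have hcd : lam 3 = starRingEnd ℂ (lam 1) :=
        zip_pair_conj (lam 0) (lam 2) (lam 1) (lam 3)
          (hinvP _ _ _ _ (by simp only [Multiset.insert_eq_cons, ← Multiset.cons_zero]; rw [Multiset.cons_swap (lam 1) (lam 2)])) hlj' h1
      have hab' : lam 0 = starRingEnd ℂ (lam 2) := by
        rw [hlj']; exact (Complex.conj_conj _).symm
      have hcd' : lam 1 = starRingEnd ℂ (lam 3) := by
        rw [hcd]; exact (Complex.conj_conj _).symm
      have rb : (lam 2).re = (lam 0).re := by rw [hlj']; simp
      have rd : (lam 3).re = (lam 1).re := by rw [hcd]; simp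
      by_cases hr : (lam 0).re < 0
      · exact ⟨⟨![0,2,1,3], ![0,2,1,3], by decide, by decide⟩, hab', h0, hr, hcd', h1⟩
      · push_neg at hr
        have hr2 : (lam 1).re < 0 := by linarith
        exact ⟨⟨![1,3,0,2], ![2,0,3,1], by decide, by decide⟩, hcd', h1, hr2, hab', h0⟩
    · -- pairs (0,3) and (1,2)
      have hlj' : lam 3 = starRingEnd ℂ (lam 0) := hlj
      have hcd : lam 2 = starRingEnd ℂ (lam 1) :=
        zip_pair_conj (lam 0) (lam 3) (lam 1) (lam 2)
          (hinvP _ _ _ _ (by simp only [Multiset.insert_eq_cons, ← Multiset.cons_zero]; rw [Multiset.cons_swap (lam 2) (lam 3),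
            Multiset.cons_swap (lam 1) (lam 3)])) hlj' h1
      have hab' : lam 0 = starRingEnd ℂ (lam 3) := by
        rw [hlj']; exact (Complex.conj_conj _).symm
      have hcd' : lam 1 = starRingEnd ℂ (lam 2) := by
        rw [hcd]; exact (Complex.conj_conj _).symm
      have rb : (lam 3).re = (lam 0).re := by rw [hlj']; simp
      have rd : (lam 2).re = (lam 1).re := by rw [hcd]; simp
      by_cases hr : (lam 0).re < 0
      · exact ⟨⟨![0,3,1,2], ![0,2,3,1], by decide, by decide⟩, hab', h0, hr, hcd', h1⟩
      · push_neg at hr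
        have hr2 : (lam 1).re < 0 := by linarith
        exact ⟨⟨![1,2,0,3], ![2,0,1,3], by decide, by decide⟩, hcd', h1, hr2, hab', h0⟩
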